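/- Let G be a finite group acting continuously and freely on a Hausdorff topological space X (i.e. g·x = x implies g = e). Then for every integer k ≥ 2, any open subset U ⊆ X × X admitting a (G,k+1)-motion planner also admits a (G,k)-motion planner; consequently TC^{G,k}(X) = TC^{G,2}(X) for all k ≥ 2, and in particular the effective topological complexity satisfies TC^{G,∞}(X) = TC^{G,2}(X). -/

import Mathlib

open Set

/-- The space of `k`-tuples of paths in `X` that are consecutive up to the `G`-action:
the `(i+1)`-st path starts in the `G`-orbit of the endpoint of the `i`-th path. -/
def effPk (G X : Type*) [Group G] [TopologicalSpace X] [MulAction G X] (k : ℕ) :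
    Set (Fin k → C(unitInterval, X)) :=
  {γ | ∀ (i : ℕ) (h : i + 1 < k),
    γ ⟨i + 1, h⟩ 0 ∈ MulAction.orbit G (γ ⟨i, Nat.lt_of_succ_lt h⟩ 1)}

/-- A `(G,k)`-motion planner on `U ⊆ X × X`: a continuous section over `U` of the map
`π_k` sending a `k`-tuple of consecutive-up-to-`G` paths to its (start, end) pair. -/
def IsEffPlanner (G X : Type*) [Group G] [TopologicalSpace X] [MulAction G X]
    (k : ℕ) (hk : 0 < k) (U : Set (X × X)) : Prop :=
  ∃ s : U → (Fin k → C(unitInterval, X)),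
    Continuous s ∧ (∀ u, s u ∈ effPk G X k) ∧
    ∀ u : U, (s u ⟨0, hk⟩) 0 = (u : X × X).1 ∧
      (s u ⟨k - 1, Nat.sub_lt hk Nat.one_pos⟩) 1 = (u : X × X).2

/-- `TC^{G,k}(X)`: the least `ℓ ≥ 1` such that `X × X` admits an open cover by `ℓ` sets,
each admitting a `(G,k)`-motion planner; `∞` if there is no such `ℓ`. -/
noncomputable def effTC (G X : Type*) [Group G] [TopologicalSpace X] [MulAction G X]
    (k : ℕ) (hk : 0 < k) : ℕ∞ :=
  sInf {ℓ : ℕ∞ | ∃ n : ℕ, ℓ = n ∧ 1 ≤ n ∧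
    ∃ U : Fin n → Set (X × X), (∀ i, IsOpen (U i)) ∧ (⋃ i, U i) = Set.univ ∧
      ∀ i, IsEffPlanner G X k hk (U i)}

/-- Effective topological complexity `TC^{G,∞}(X)`: the minimum of `TC^{G,k}(X)` over `k ≥ 1`. -/
noncomputable def effTCinf (G X : Type*) [Group G] [TopologicalSpace X] [MulAction G X] : ℕ∞ :=
  ⨅ k : ℕ, effTC G X (k + 1) k.succ_pos

/-- Farber's (non-reduced) topological complexity `TC(X)`. -/
noncomputable def farberTC (X : Type*) [TopologicalSpace X] : ℕ∞ :=
  sInf {ℓ : ℕ∞ | ∃ n : ℕ, ℓ = n ∧ 1 ≤ n ∧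
    ∃ U : Fin n → Set (X × X), (∀ i, IsOpen (U i)) ∧ (⋃ i, U i) = Set.univ ∧
      ∀ i, ∃ s : (U i) → C(unitInterval, X), Continuous s ∧
        ∀ u : (U i), (s u) 0 = (u : X × X).1 ∧ (s u) 1 = (u : X × X).2}

/-- Padding: a `(G,k)`-planner yields a `(G,k+1)`-planner by appending a constant path. -/
theorem effPlanner_pad {G X : Type*} [Group G] [TopologicalSpace X] [MulAction G X]
    {k : ℕ} (hk : 0 < k) {U : Set (X × X)}
    (h : IsEffPlanner G X k hk U) : IsEffPlanner G X (k + 1) k.succ_pos U := by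
  obtain ⟨s, hs, hmem, hends⟩ := h
  classical
  refine ⟨fun u i => if hi : (i : ℕ) < k then s u ⟨i, hi⟩
      else ContinuousMap.const _ ((s u ⟨k - 1, Nat.sub_lt hk Nat.one_pos⟩) 1), ?_, ?_, ?_⟩
  · refine continuous_pi fun i => ?_
    by_cases hi : (i : ℕ) < k
    · simpa only [dif_pos hi, Function.comp_def] using (continuous_apply _).comp hs
    · simp only [dif_neg hi]
      exact ContinuousMap.continuous_const'.comp
        ((continuous_eval_const _).comp ((continuous_apply _).comp hs))
  · intro u i hi
    simp only [mem_setOf_eq] at *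
    by_cases h1 : i + 1 < k
    · have h0 : i < k := Nat.lt_of_succ_lt h1
      simp only [dif_pos h1, dif_pos h0]
      exact hmem u i h1
    · have h0 : i < k := by omega
      simp only [dif_neg (by omega : ¬ (i + 1 < k)), dif_pos h0]
      have : (⟨i, h0⟩ : Fin k) = ⟨k - 1, Nat.sub_lt hk Nat.one_pos⟩ := by
        apply Fin.ext; simp; omega
      rw [this]
      exact MulAction.mem_orbit_self _
  · intro u
    constructor
    · simp only [dif_pos hk]
      exact (hends u).1
    · simp only [dif_neg (by omega : ¬ ((k + 1 - 1 : ℕ) < k))]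
      simpa using (hends u).2

/-- Merging: for a free action of a finite (discrete) group on a Hausdorff space,
a `(G,m+3)`-planner yields a `(G,m+2)`-planner by concatenating the first two paths. -/
theorem effPlanner_merge {G : Type*} [Group G] [Finite G] [TopologicalSpace G]
    [DiscreteTopology G] {X : Type*} [TopologicalSpace X] [T2Space X]
    [MulAction G X] [ContinuousSMul G X]
    (hfree : ∀ (a : G) (x : X), a • x = x → a = 1)
    {m : ℕ} {U : Set (X × X)}
    (h : IsEffPlanner G X (m + 3) (by omega) U) :
    IsEffPlanner G X (m + 2) (by omega) U := by
  classical
  obtain ⟨s, hs, hmem, hends⟩ := h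
  have huniq : ∀ (a b : G) (x : X), a • x = b • x → a = b := by
    intro a b x hab
    have : (b⁻¹ * a) • x = x := by rw [mul_smul, hab, inv_smul_smul]
    exact ((inv_mul_eq_one.mp (hfree _ _ this))).symm
  have horb : ∀ u : U, ∃ g : G, g • (s u ⟨0, by omega⟩) 1 = (s u ⟨1, by omega⟩) 0 :=
    fun u => MulAction.mem_orbit_iff.mp (hmem u 0 (by omega))
  set g : U → G := fun u => (horb u).choose with hgdef
  have hg : ∀ u : U, g u • (s u ⟨0, by omega⟩) 1 = (s u ⟨1, by omega⟩) 0 :=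
    fun u => (horb u).choose_spec
  have he0 : Continuous fun u : U => (s u ⟨0, by omega⟩) 1 :=
    (continuous_eval_const _).comp ((continuous_apply _).comp hs)
  have he1 : Continuous fun u : U => (s u ⟨1, by omega⟩) 0 :=
    (continuous_eval_const _).comp ((continuous_apply _).comp hs)
  have hC : ∀ a : G, IsClosed {u : U | (s u ⟨1, by omega⟩) 0 = a • (s u ⟨0, by omega⟩) 1} :=
    fun a => isClosed_eq he1 ((continuous_const_smul a).comp he0)
  have hfib : ∀ a : G, g ⁻¹' {a} = {u : U | (s u ⟨1, by omega⟩) 0 = a • (s u ⟨0, by omega⟩) 1} := by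
    intro a
    ext u
    simp only [mem_preimage, mem_singleton_iff, mem_setOf_eq]
    constructor
    · rintro rfl; exact (hg u).symm
    · intro hE; exact huniq _ _ _ ((hg u).trans hE)
  have hgcont : Continuous g := by
    rw [continuous_discrete_rng]
    intro a
    rw [hfib a, ← isClosed_compl_iff]
    have : {u : U | (s u ⟨1, by omega⟩) 0 = a • (s u ⟨0, by omega⟩) 1}ᶜ
        = ⋃ b ∈ {b : G | b ≠ a}, {u : U | (s u ⟨1, by omega⟩) 0 = b • (s u ⟨0, by omega⟩) 1} := by
      ext u
      simp only [mem_compl_iff, mem_setOf_eq, mem_iUnion, exists_prop]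
      constructor
      · intro hne
        exact ⟨g u, fun hgu => hne (by rw [← hgu]; exact (hg u).symm), (hg u).symm⟩
      · rintro ⟨b, hba, hb⟩ hA
        exact hba (huniq b a _ (hb.symm.trans hA))
    rw [this]
    exact Set.Finite.isClosed_biUnion (Set.toFinite _) fun b _ => hC b
  have hq0 : ∀ u : U, ((g u)⁻¹ • (s u ⟨1, by omega⟩)) 0 = (s u ⟨0, by omega⟩) 1 := by
    intro u
    show (g u)⁻¹ • (s u ⟨1, by omega⟩) 0 = _
    rw [← hg u, inv_smul_smul]
  let P1 : ∀ u : U, Path ((s u ⟨0, by omega⟩) 0) ((s u ⟨0, by omega⟩) 1) :=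
    fun u => ⟨s u ⟨0, by omega⟩, rfl, rfl⟩
  let P2 : ∀ u : U, Path ((s u ⟨0, by omega⟩) 1) (((g u)⁻¹ • (s u ⟨1, by omega⟩)) 1) :=
    fun u => ⟨(g u)⁻¹ • (s u ⟨1, by omega⟩), hq0 u, rfl⟩
  let merged : U → C(unitInterval, X) := fun u => ((P1 u).trans (P2 u)).toContinuousMap
  have hP1 : Continuous ↿P1 :=
    (((continuous_apply _).comp hs).comp continuous_fst).eval continuous_snd
  have hP2 : Continuous ↿P2 := by
    show Continuous fun p : U × unitInterval => (g p.1)⁻¹ • (s p.1 ⟨1, by omega⟩) p.2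
    exact continuous_smul.comp
      (((continuous_of_discreteTopology (f := fun a : G => a⁻¹)).comp
        (hgcont.comp continuous_fst)).prodMk
        ((((continuous_apply _).comp hs).comp continuous_fst).eval continuous_snd))
  have hmerged : Continuous merged := by
    apply ContinuousMap.continuous_of_continuous_uncurry
    exact Path.trans_continuous_family P1 hP1 P2 hP2
  refine ⟨fun u => Fin.cons (merged u) (fun j : Fin (m + 1) => s u j.succ.succ), ?_, ?_, ?_⟩
  · refine continuous_pi fun i => ?_
    refine Fin.cases ?_ ?_ i
    · simpa using hmerged
    · intro j
      simpa [Function.comp_def] using ((continuous_apply _).comp hs)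
  · intro u i hi
    simp only [effPk, mem_setOf_eq] at *
    rcases Nat.eq_zero_or_pos i with rfl | hipos
    · have e1 : (⟨0 + 1, hi⟩ : Fin (m + 2)) = Fin.succ ⟨0, by omega⟩ := rfl
      have e0 : (⟨0, Nat.lt_of_succ_lt hi⟩ : Fin (m + 2)) = 0 := rfl
      rw [e1, e0, Fin.cons_succ, Fin.cons_zero]
      have : (merged u) 1 = (g u)⁻¹ • (s u ⟨1, by omega⟩) 1 := by
        show ((P1 u).trans (P2 u)) 1 = _
        rw [Path.target]
        rfl
      rw [this, MulAction.orbit_smul]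
      have := hmem u 1 (by omega)
      convert this using 3
      all_goals exact Fin.ext (by simp <;> omega)
    · obtain ⟨j, rfl⟩ : ∃ j, i = j + 1 := ⟨i - 1, by omega⟩
      have e1 : (⟨j + 1 + 1, hi⟩ : Fin (m + 2)) = Fin.succ ⟨j + 1, by omega⟩ := rfl
      have e0 : (⟨j + 1, Nat.lt_of_succ_lt hi⟩ : Fin (m + 2)) = Fin.succ ⟨j, by omega⟩ := rfl
      rw [e1, e0, Fin.cons_succ, Fin.cons_succ]
      have := hmem u (j + 2) (by omega)
      convert this using 3
      all_goals exact rfl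
  · intro u
    constructor
    · have e0 : (⟨0, by omega⟩ : Fin (m + 2)) = 0 := rfl
      beta_reduce
      rw [e0, Fin.cons_zero]
      have : (merged u) 0 = (s u ⟨0, by omega⟩) 0 := by
        show ((P1 u).trans (P2 u)) 0 = _
        rw [Path.source]
      rw [this]
      exact (hends u).1
    · have e1 : (⟨m + 2 - 1, Nat.sub_lt (by omega) Nat.one_pos⟩ : Fin (m + 2))
        = Fin.succ ⟨m, by omega⟩ := rfl
      beta_reduce
      rw [e1, Fin.cons_succ]
      have := (hends u).2
      convert this using 3
      all_goals exact Fin.ext (by simp <;> omega)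

/-- Iterated merging: a `(G,k)`-planner yields a `(G,2)`-planner, for `k ≥ 2`. -/
theorem effPlanner_down {G : Type*} [Group G] [Finite G] [TopologicalSpace G]
    [DiscreteTopology G] {X : Type*} [TopologicalSpace X] [T2Space X]
    [MulAction G X] [ContinuousSMul G X]
    (hfree : ∀ (a : G) (x : X), a • x = x → a = 1) :
    ∀ (k : ℕ) (_hk2 : 2 ≤ k) (U : Set (X × X)),
      IsEffPlanner G X k (lt_of_lt_of_le two_pos _hk2) U → IsEffPlanner G X 2 two_pos U := by
  intro k
  induction k with
  | zero => intro hk; exact absurd hk (by omega)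
  | succ n ih =>
    intro hk U h
    rcases Nat.lt_or_ge n 2 with h2 | h2
    · have hn : n = 1 := by omega
      subst hn
      exact h
    · obtain ⟨m, rfl⟩ : ∃ m, n = m + 2 := ⟨n - 2, by omega⟩
      exact ih (by omega) U (effPlanner_merge hfree h)

/-- Iterated padding: a `(G,2)`-planner yields a `(G,k)`-planner, for `k ≥ 2`. -/
theorem effPlanner_up {G X : Type*} [Group G] [TopologicalSpace X] [MulAction G X] :
    ∀ (k : ℕ) (_hk2 : 2 ≤ k) (U : Set (X × X)),
      IsEffPlanner G X 2 two_pos U → IsEffPlanner G X k (lt_of_lt_of_le two_pos _hk2) U := by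
  intro k hk
  induction k, hk using Nat.le_induction with
  | base => intro U h; exact h
  | succ n hn ih =>
    intro U h
    exact effPlanner_pad (by omega) (ih U h)

/-- Monotonicity of `effTC` along planner implications. -/
theorem effTC_mono {G X : Type*} [Group G] [TopologicalSpace X] [MulAction G X]
    {k k' : ℕ} (hk : 0 < k) (hk' : 0 < k')
    (himp : ∀ U : Set (X × X), IsEffPlanner G X k hk U → IsEffPlanner G X k' hk' U) :
    effTC G X k' hk' ≤ effTC G X k hk := by
  apply sInf_le_sInf
  rintro ℓ ⟨n, rfl, hn, Us, ho, hc, hp⟩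
  exact ⟨n, rfl, hn, Us, ho, hc, fun i => himp _ (hp i)⟩

/-- For a finite group `G` (with the discrete topology) acting continuously
and freely on a Hausdorff space `X`: for every `k ≥ 2`, any open `U ⊆ X × X` with a
`(G,k+1)`-motion planner also has a `(G,k)`-motion planner; consequently
`TC^{G,k}(X) = TC^{G,2}(X)` for all `k ≥ 2` and `TC^{G,∞}(X) = TC^{G,2}(X)`. -/
theorem effTC_stabilizes_of_free {G : Type*} [Group G] [Finite G] [TopologicalSpace G]
    [DiscreteTopology G] {X : Type*} [TopologicalSpace X] [T2Space X]
    [MulAction G X] [ContinuousSMul G X]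
    (hfree : ∀ (a : G) (x : X), a • x = x → a = 1) :
    (∀ (k : ℕ) (hk : 2 ≤ k), ∀ U : Set (X × X), IsOpen U →
      IsEffPlanner G X (k + 1) (by omega) U → IsEffPlanner G X k (by omega) U) ∧
    (∀ (k : ℕ) (hk : 2 ≤ k), effTC G X k (by omega) = effTC G X 2 (by omega)) ∧
    effTCinf G X = effTC G X 2 (by omega) := by
  have key : ∀ (k : ℕ) (hk : 2 ≤ k), effTC G X k (by omega) = effTC G X 2 (by omega) := by
    intro k hk
    apply le_antisymm
    · exact effTC_mono (by omega) (by omega) (fun U => effPlanner_up k hk U)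
    · exact effTC_mono (by omega) (by omega) (fun U => effPlanner_down hfree k hk U)
  refine ⟨?_, key, ?_⟩
  · intro k hk U _ h
    obtain ⟨m, rfl⟩ : ∃ m, k = m + 2 := ⟨k - 2, by omega⟩
    exact effPlanner_merge hfree h
  · apply le_antisymm
    · exact iInf_le _ 1
    · refine le_iInf fun k => ?_
      rcases Nat.eq_zero_or_pos k with rfl | hkpos
      · exact effTC_mono (by omega) (by omega)
          (fun U h => effPlanner_pad (by omega) h)
      · exact le_of_eq (key (k + 1) (by omega)).symm
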